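/- Assume ‖φ s‖ ≤ φ∞ for all s, 0 ≤ γ ≤ 1, P s s' ≥ 0 with ∑_{s'} P s s' = 1 for every s, and π s ≥ 0 with ∑_s π s = 1. Then for all θ, θ' ∈ EuclideanSpace ℝ (Fin d), ‖ḡ(θ) − ḡ(θ')‖ ≤ 2·φ∞²·‖θ − θ'‖. -/

import Mathlib

open scoped RealInnerProductSpace
open Finset

theorem stmt_3 (n d : ℕ) (hn : 1 ≤ n) (hd : 1 ≤ d)
    (γ : ℝ) (hγ0 : 0 ≤ γ) (hγ1 : γ ≤ 1)
    (P : Fin n → Fin n → ℝ)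
    (hP0 : ∀ s s', 0 ≤ P s s') (hP1 : ∀ s, ∑ s', P s s' = 1)
    (π : Fin n → ℝ)
    (hπ0 : ∀ s, 0 ≤ π s) (hπ1 : ∑ s, π s = 1)
    (r : Fin n → Fin n → ℝ)
    (φ : Fin n → EuclideanSpace ℝ (Fin d))
    (φinf : ℝ) (hφinf : 0 ≤ φinf)
    (hφ : ∀ s, ‖φ s‖ ≤ φinf)
    (g : EuclideanSpace ℝ (Fin d) → Fin n → Fin n → EuclideanSpace ℝ (Fin d))
    (hg : ∀ θ s s', g θ s s' = (r s s' + γ * ⟪φ s', θ⟫ - ⟪φ s, θ⟫) • φ s)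
    (gbar : EuclideanSpace ℝ (Fin d) → EuclideanSpace ℝ (Fin d))
    (hgbar : ∀ θ, gbar θ = ∑ s, ∑ s', (π s * P s s') • g θ s s')
    (θ θ' : EuclideanSpace ℝ (Fin d)) :
    ‖gbar θ - gbar θ'‖ ≤ 2 * φinf ^ 2 * ‖θ - θ'‖ := by
  set C := 2 * φinf ^ 2 * ‖θ - θ'‖ with hC
  have hC0 : 0 ≤ C := by positivity
  have key : ∀ s s', ‖(π s * P s s') • g θ s s' - (π s * P s s') • g θ' s s'‖
      ≤ π s * P s s' * C := by
    intro s s'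
    rw [← smul_sub, hg, hg]
    have hrw : (r s s' + γ * ⟪φ s', θ⟫ - ⟪φ s, θ⟫) • φ s
        - (r s s' + γ * ⟪φ s', θ'⟫ - ⟪φ s, θ'⟫) • φ s
        = (γ * ⟪φ s', θ - θ'⟫ - ⟪φ s, θ - θ'⟫) • φ s := by
      rw [← sub_smul]; congr 1
      simp only [inner_sub_right]; ring
    rw [hrw, norm_smul, norm_smul, Real.norm_eq_abs, Real.norm_eq_abs,
      abs_of_nonneg (mul_nonneg (hπ0 s) (hP0 s s'))]
    apply mul_le_mul_of_nonneg_left _ (mul_nonneg (hπ0 s) (hP0 s s'))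
    have ha : |⟪φ s', θ - θ'⟫| ≤ φinf * ‖θ - θ'‖ :=
      (abs_real_inner_le_norm (φ s') (θ - θ')).trans
        (mul_le_mul_of_nonneg_right (hφ s') (norm_nonneg _))
    have hb : |⟪φ s, θ - θ'⟫| ≤ φinf * ‖θ - θ'‖ :=
      (abs_real_inner_le_norm (φ s) (θ - θ')).trans
        (mul_le_mul_of_nonneg_right (hφ s) (norm_nonneg _))
    have h1 : |γ * ⟪φ s', θ - θ'⟫ - ⟪φ s, θ - θ'⟫| ≤ 2 * φinf * ‖θ - θ'‖ := by
      have := abs_sub (γ * ⟪φ s', θ - θ'⟫) (⟪φ s, θ - θ'⟫)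
      have hγa : |γ * ⟪φ s', θ - θ'⟫| ≤ φinf * ‖θ - θ'‖ := by
        rw [abs_mul, abs_of_nonneg hγ0]
        nlinarith [abs_nonneg (⟪φ s', θ - θ'⟫ : ℝ)]
      linarith
    calc |γ * ⟪φ s', θ - θ'⟫ - ⟪φ s, θ - θ'⟫| * ‖φ s‖
        ≤ (2 * φinf * ‖θ - θ'‖) * φinf :=
          mul_le_mul h1 (hφ s) (norm_nonneg _) (by positivity)
      _ = C := by rw [hC]; ring
  calc ‖gbar θ - gbar θ'‖
      = ‖∑ s, ∑ s', ((π s * P s s') • g θ s s' - (π s * P s s') • g θ' s s')‖ := by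
        rw [hgbar, hgbar, ← Finset.sum_sub_distrib]
        congr 1
        exact Finset.sum_congr rfl fun s _ => (Finset.sum_sub_distrib _ _).symm
    _ ≤ ∑ s, ∑ s', π s * P s s' * C := by
        refine (norm_sum_le _ _).trans (Finset.sum_le_sum fun s _ => ?_)
        exact (norm_sum_le _ _).trans (Finset.sum_le_sum fun s' _ => key s s')
    _ = C := by
        simp only [← Finset.sum_mul, ← Finset.mul_sum, hP1, mul_one, hπ1, one_mul]
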